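/- arXiv:1011.0941 — 2 statements merged into one kernel-verified Lean document; each statement's English description precedes it below -/
import Mathlib

section
/- Let n, h, k be integers with k ≥ 1, h ≥ 0, n ≡ h (mod 2), and set s = min(k−1, h). Then the total number of k-down steps, summed over all generalized Dyck paths from (0,0) to (n,h), equals the sum over j = 0, 1, …, s of the number of generalized Dyck paths from (0,0) to (n, 2k−2j+h). (In other words, the set of pairs (D, i), where D is a generalized Dyck path from (0,0) to (n,h) and i is the position of a k-down step of D, is in bijection with the disjoint union over j = 0, …, s of the sets of generalized Dyck paths from (0,0) to (n, 2k−2j+h).) -/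
open Finset

attribute [local instance] Classical.propDecidable

/-- The height of the lattice path `p` (where `true` is a northeast step `(1,1)` and
`false` is a southeast step `(1,-1)`) after its first `i` steps. -/
def pathHeight {n : ℕ} (p : Fin n → Bool) (i : ℕ) : ℤ :=
  ∑ j ∈ Finset.univ.filter (fun j : Fin n => (j : ℕ) < i), (if p j then (1 : ℤ) else -1)

/-- `p` is a generalized Dyck path from `(0,0)` to `(n,h)`: it ends at height `h`
and never goes below the x-axis. -/
def IsGDPath {n : ℕ} (h : ℤ) (p : Fin n → Bool) : Prop :=
  pathHeight p n = h ∧ ∀ i ≤ n, 0 ≤ pathHeight p i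

/-- The set of generalized Dyck paths from `(0,0)` to `(n,h)`. -/
noncomputable def gdPaths (n : ℕ) (h : ℤ) : Finset (Fin n → Bool) :=
  Finset.univ.filter (IsGDPath h)

/-- The number of `k`-down steps of `p`, i.e. southeast steps from height `k` to `k-1`. -/
noncomputable def downSteps {n : ℕ} (k : ℤ) (p : Fin n → Bool) : ℕ :=
  (Finset.univ.filter (fun i : Fin n => p i = false ∧ pathHeight p (i : ℕ) = k)).card

-- helper lemmas

lemma pathHeight_apply {n : ℕ} (p : Fin n → Bool) (i : ℕ) :
    pathHeight p i = ∑ j : Fin n, if (j : ℕ) < i then (if p j then (1 : ℤ) else -1) else 0 := by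
  rw [pathHeight, sum_filter]

lemma pathHeight_snoc {n : ℕ} (q : Fin n → Bool) (b : Bool) (i : ℕ) :
    pathHeight (Fin.snoc q b) i
      = pathHeight q i + (if n < i then (if b then (1 : ℤ) else -1) else 0) := by
  rw [pathHeight_apply, pathHeight_apply, Fin.sum_univ_castSucc]
  simp

lemma pathHeight_stable {n : ℕ} (q : Fin n → Bool) {i : ℕ} (hi : n ≤ i) :
    pathHeight q i = pathHeight q n := by
  rw [pathHeight_apply, pathHeight_apply]
  refine Finset.sum_congr rfl fun j _ => ?_
  rw [if_pos (lt_of_lt_of_le j.isLt hi), if_pos j.isLt]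

lemma isGDPath_snoc {n : ℕ} (q : Fin n → Bool) (b : Bool) (H : ℤ) :
    IsGDPath H (Fin.snoc q b) ↔ IsGDPath (H - (if b then 1 else -1)) q ∧ 0 ≤ H := by
  have hph : pathHeight (Fin.snoc q b) (n + 1)
      = pathHeight q n + (if b then (1 : ℤ) else -1) := by
    rw [pathHeight_snoc, if_pos (Nat.lt_succ_self n), pathHeight_stable q (Nat.le_succ n)]
  have hle : ∀ i ≤ n, pathHeight (Fin.snoc q b) i = pathHeight q i := by
    intro i hi
    rw [pathHeight_snoc, if_neg (by omega), add_zero]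
  constructor
  · rintro ⟨h1, h2⟩
    have h0 : 0 ≤ H := h1 ▸ h2 (n + 1) le_rfl
    refine ⟨⟨by rw [hph] at h1; omega, fun i hi => ?_⟩, h0⟩
    rw [← hle i hi]; exact h2 i (by omega)
  · rintro ⟨⟨h1, h2⟩, h0⟩
    refine ⟨by rw [hph]; omega, fun i hi => ?_⟩
    rcases Nat.lt_or_ge i (n + 1) with hi' | hi'
    · rw [hle i (by omega)]; exact h2 i (by omega)
    · have : i = n + 1 := by omega
      subst this
      rw [hph]; omega

lemma downSteps_snoc {n : ℕ} (k : ℤ) (q : Fin n → Bool) (b : Bool) :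
    downSteps k (Fin.snoc q b)
      = downSteps k q + (if b = false ∧ pathHeight q n = k then 1 else 0) := by
  have h2 : ∀ i : ℕ, i ≤ n → pathHeight (Fin.snoc q b) i = pathHeight q i := by
    intro i hi
    rw [pathHeight_snoc, if_neg (by omega), add_zero]
  rw [downSteps, downSteps, Finset.card_filter, Finset.card_filter, Fin.sum_univ_castSucc]
  congr 1
  · refine Finset.sum_congr rfl fun j _ => ?_
    simp only [Fin.snoc_castSucc, Fin.coe_castSucc, h2 (j : ℕ) (le_of_lt j.isLt)]
  · simp only [Fin.snoc_last, Fin.val_last, h2 n le_rfl]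

noncomputable def gdf (n : ℕ) (H : ℤ) : ℕ := (gdPaths n H).card

noncomputable def gdL (n : ℕ) (H : ℤ) (k : ℤ) : ℕ := ∑ p ∈ gdPaths n H, downSteps k p

private def snocEquivBool (n : ℕ) : ((Fin n → Bool) × Bool) ≃ (Fin (n + 1) → Bool) where
  toFun x := Fin.snoc x.1 x.2
  invFun p := (fun j => p j.castSucc, p (Fin.last n))
  left_inv x := by simp
  right_inv p := by simp [Fin.snoc_castSucc, Fin.snoc_last]; exact funext fun j => Fin.lastCases (by simp) (by simp) j

lemma sum_gdPaths_snoc {M : Type*} [AddCommMonoid M] (n : ℕ) (H : ℤ) (hH : 0 ≤ H)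
    (g : (Fin (n + 1) → Bool) → M) :
    ∑ p ∈ gdPaths (n + 1) H, g p
      = (∑ q ∈ gdPaths n (H - 1), g (Fin.snoc q true))
        + ∑ q ∈ gdPaths n (H + 1), g (Fin.snoc q false) := by
  rw [gdPaths, sum_filter, gdPaths, sum_filter, gdPaths, sum_filter]
  rw [← Fintype.sum_equiv (snocEquivBool n)
      (fun x => if IsGDPath H (Fin.snoc x.1 x.2) then g (Fin.snoc x.1 x.2) else 0)
      (fun p => if IsGDPath H p then g p else 0) (fun x => rfl)]
  rw [Fintype.sum_prod_type, ← Finset.sum_add_distrib]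
  refine Finset.sum_congr rfl fun q _ => ?_
  rw [Fintype.sum_bool]
  congr 1
  · rw [isGDPath_snoc]
    simp [hH]
  · rw [isGDPath_snoc]
    simp only [if_neg, Bool.false_eq_true, if_false]
    simp [hH, sub_neg_eq_add]

lemma gdf_succ (n : ℕ) (H : ℤ) (hH : 0 ≤ H) :
    gdf (n + 1) H = gdf n (H - 1) + gdf n (H + 1) := by
  simp only [gdf, Finset.card_eq_sum_ones]
  exact sum_gdPaths_snoc n H hH (fun _ => 1)

lemma mem_gdPaths {n : ℕ} {H : ℤ} {p : Fin n → Bool} (hp : p ∈ gdPaths n H) :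
    pathHeight p n = H ∧ ∀ i ≤ n, 0 ≤ pathHeight p i := by
  rw [gdPaths, Finset.mem_filter] at hp
  exact hp.2

lemma gdPaths_neg {n : ℕ} {H : ℤ} (hH : H < 0) : gdPaths n H = ∅ := by
  ext p
  simp only [Finset.notMem_empty, iff_false]
  intro hp
  obtain ⟨h1, h2⟩ := mem_gdPaths hp
  have := h2 n le_rfl
  omega

lemma gdL_succ (n : ℕ) (H : ℤ) (k : ℤ) (hH : 0 ≤ H) :
    gdL (n + 1) H k = gdL n (H - 1) k + gdL n (H + 1) k
      + (if H + 1 = k then gdf n (H + 1) else 0) := by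
  rw [gdL, sum_gdPaths_snoc n H hH (downSteps k)]
  have e1 : ∑ q ∈ gdPaths n (H - 1), downSteps k (Fin.snoc q true)
      = gdL n (H - 1) k := by
    refine Finset.sum_congr rfl fun q _ => ?_
    rw [downSteps_snoc, if_neg (by simp), add_zero]
  have e2 : ∑ q ∈ gdPaths n (H + 1), downSteps k (Fin.snoc q false)
      = gdL n (H + 1) k + (if H + 1 = k then gdf n (H + 1) else 0) := by
    have : ∀ q ∈ gdPaths n (H + 1), downSteps k (Fin.snoc q false)
        = downSteps k q + (if H + 1 = k then 1 else 0) := by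
      intro q hq
      rw [downSteps_snoc, (mem_gdPaths hq).1]
      simp
    rw [Finset.sum_congr rfl this, Finset.sum_add_distrib]
    congr 1
    split_ifs <;> simp [gdf]
  rw [e1, e2, add_assoc]

lemma pathHeight_fin0 (p : Fin 0 → Bool) (i : ℕ) : pathHeight p i = 0 := by
  simp [pathHeight]

lemma gdPaths_zero_ne {H : ℤ} (hH : H ≠ 0) : gdPaths 0 H = ∅ := by
  ext p
  simp only [Finset.notMem_empty, iff_false]
  intro hp
  exact hH (by rw [← (mem_gdPaths hp).1, pathHeight_fin0])

lemma key (k : ℕ) (hk : 1 ≤ k) : ∀ (n : ℕ) (h : ℕ),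
    gdL n (h : ℤ) (k : ℤ)
      = ∑ j ∈ Finset.range (min (k - 1) h + 1), gdf n (2 * (k : ℤ) - 2 * (j : ℤ) + (h : ℤ)) := by
  intro n
  induction n with
  | zero =>
    intro h
    have lhs0 : gdL 0 (h : ℤ) (k : ℤ) = 0 := by
      rw [gdL]
      exact Finset.sum_eq_zero fun p _ => by simp [downSteps]
    rw [lhs0]
    symm
    refine Finset.sum_eq_zero fun j hj => ?_
    rw [Finset.mem_range] at hj
    have hne : (2 * (k : ℤ) - 2 * (j : ℤ) + (h : ℤ)) ≠ 0 := by omega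
    rw [gdf, gdPaths_zero_ne hne, Finset.card_empty]
  | succ n IH =>
    intro h
    have h0 : (0 : ℤ) ≤ (h : ℤ) := Int.natCast_nonneg h
    rw [gdL_succ n (h : ℤ) (k : ℤ) h0]
    have hRHS : ∑ j ∈ Finset.range (min (k - 1) h + 1), gdf (n + 1) (2 * (k : ℤ) - 2 * j + h)
        = (∑ j ∈ Finset.range (min (k - 1) h + 1), gdf n (2 * (k : ℤ) - 2 * j + h - 1))
          + ∑ j ∈ Finset.range (min (k - 1) h + 1), gdf n (2 * (k : ℤ) - 2 * j + h + 1) := by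
      rw [← Finset.sum_add_distrib]
      refine Finset.sum_congr rfl fun j hj => ?_
      rw [Finset.mem_range] at hj
      exact gdf_succ n _ (by omega)
    rw [hRHS]
    rcases h with _ | h'
    · -- h = 0
      have hL : gdL n ((0:ℕ) - 1 : ℤ) (k : ℤ) = 0 := by
        rw [gdL, gdPaths_neg (by norm_num), Finset.sum_empty]
      have hL1 : gdL n (((0:ℕ):ℤ) + 1) (k : ℤ) = gdL n ((1:ℕ) : ℤ) (k : ℤ) := by norm_num
      rw [hL, hL1, IH 1]
      have hm0 : min (k - 1) 0 = 0 := Nat.min_zero _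
      rw [hm0, Finset.sum_range_one, Finset.sum_range_one]
      rcases Nat.lt_or_ge k 2 with hk1 | hk2
      · -- k = 1
        have hke : k = 1 := by omega
        subst hke
        have hm1 : min (1 - 1) 1 = 0 := by omega
        rw [hm1, Finset.sum_range_one, if_pos (by norm_num : ((0:ℕ):ℤ) + 1 = ((1:ℕ):ℤ))]
        push_cast
        ring_nf
      · -- k ≥ 2
        have hmin : min (k - 1) 1 = 1 := by omega
        rw [hmin, Finset.sum_range_succ, Finset.sum_range_one]
        rw [if_neg (by push_cast; omega : ¬ ((0:ℕ):ℤ) + 1 = (k:ℤ))]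
        push_cast
        ring_nf
    · -- h = h' + 1
      have eL1 : gdL n (((h' + 1 : ℕ) : ℤ) - 1) (k : ℤ)
          = ∑ j ∈ Finset.range (min (k - 1) h' + 1),
              gdf n (2 * (k : ℤ) - 2 * (j : ℤ) + ((h' + 1 : ℕ) : ℤ) - 1) := by
        have hc : (((h' + 1 : ℕ) : ℤ) - 1) = ((h' : ℕ) : ℤ) := by push_cast; ring
        rw [hc, IH h']
        refine Finset.sum_congr rfl fun j _ => ?_
        congr 1
        push_cast; ring
      have eL2 : gdL n (((h' + 1 : ℕ) : ℤ) + 1) (k : ℤ)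
          = ∑ j ∈ Finset.range (min (k - 1) (h' + 2) + 1),
              gdf n (2 * (k : ℤ) - 2 * (j : ℤ) + ((h' + 1 : ℕ) : ℤ) + 1) := by
        have hc : (((h' + 1 : ℕ) : ℤ) + 1) = ((h' + 2 : ℕ) : ℤ) := by push_cast; ring
        rw [hc, IH (h' + 2)]
        refine Finset.sum_congr rfl fun j _ => ?_
        congr 1
        push_cast; ring
      rw [eL1, eL2]
      have cF : ∀ m : ℕ,
          ∑ j ∈ Finset.range m, gdf n (2 * (k : ℤ) - 2 * (j : ℤ) + ((h' + 1 : ℕ) : ℤ) - 1)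
            = ∑ j ∈ Finset.range m, gdf n (2 * (k : ℤ) + (h' : ℤ) - 2 * (j : ℤ)) :=
        fun m => Finset.sum_congr rfl fun j _ => by congr 1; push_cast; ring
      have cG : ∀ m : ℕ,
          ∑ j ∈ Finset.range m, gdf n (2 * (k : ℤ) - 2 * (j : ℤ) + ((h' + 1 : ℕ) : ℤ) + 1)
            = ∑ j ∈ Finset.range m, gdf n (2 * (k : ℤ) + (h' : ℤ) + 2 - 2 * (j : ℤ)) :=
        fun m => Finset.sum_congr rfl fun j _ => by congr 1; push_cast; ring
      rw [cF, cF, cG, cG]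
      have hGF : ∀ m : ℕ,
          ∑ j ∈ Finset.range (m + 1), gdf n (2 * (k : ℤ) + (h' : ℤ) + 2 - 2 * (j : ℤ))
            = (∑ j ∈ Finset.range m, gdf n (2 * (k : ℤ) + (h' : ℤ) - 2 * (j : ℤ)))
              + gdf n (2 * (k : ℤ) + (h' : ℤ) + 2) := by
        intro m
        have t1 : (∑ i ∈ Finset.range m,
              gdf n (2 * (k : ℤ) + (h' : ℤ) + 2 - 2 * ((i + 1 : ℕ) : ℤ)))
            = ∑ j ∈ Finset.range m, gdf n (2 * (k : ℤ) + (h' : ℤ) - 2 * (j : ℤ)) :=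
          Finset.sum_congr rfl fun j _ => by congr 1; push_cast; ring
        have t2 : gdf n (2 * (k : ℤ) + (h' : ℤ) + 2 - 2 * ((0 : ℕ) : ℤ))
            = gdf n (2 * (k : ℤ) + (h' : ℤ) + 2) := by norm_num
        rw [Finset.sum_range_succ' _ m, t1, t2]
      rcases Nat.lt_or_ge (h' + 2) k with hcase | hcase
      · -- h' + 3 ≤ k
        have m1 : min (k - 1) h' = h' := by omega
        have m2 : min (k - 1) (h' + 1) = h' + 1 := by omega
        have m3 : min (k - 1) (h' + 2) = h' + 2 := by omega
        rw [m1, m2, m3]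
        rw [if_neg (by push_cast; omega : ¬ (((h' + 1 : ℕ) : ℤ) + 1 = (k : ℤ)))]
        rw [show h' + 2 + 1 = (h' + 1) + 1 + 1 from rfl, hGF (h' + 1 + 1), hGF (h' + 1)]
        rw [show h' + 1 + 1 = h' + 2 from rfl]
        omega
      · by_cases hk2 : k = h' + 2
        · -- h = k - 1
          have m1 : min (k - 1) h' = h' := by omega
          have m2 : min (k - 1) (h' + 1) = h' + 1 := by omega
          have m3 : min (k - 1) (h' + 2) = h' + 1 := by omega
          rw [m1, m2, m3]
          rw [if_pos (by push_cast; omega : (((h' + 1 : ℕ) : ℤ) + 1 = (k : ℤ)))]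
          rw [Finset.sum_range_succ
              (fun j : ℕ => gdf n (2 * (k : ℤ) + (h' : ℤ) - 2 * (j : ℤ))) (h' + 1)]
          have e : gdf n (((h' + 1 : ℕ) : ℤ) + 1)
              = gdf n (2 * (k : ℤ) + (h' : ℤ) - 2 * ((h' + 1 : ℕ) : ℤ)) := by
            congr 1; push_cast; omega
          rw [e]
          omega
        · -- h ≥ k
          have m1 : min (k - 1) h' = k - 1 := by omega
          have m2 : min (k - 1) (h' + 1) = k - 1 := by omega
          have m3 : min (k - 1) (h' + 2) = k - 1 := by omega
          rw [m1, m2, m3]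
          rw [if_neg (by push_cast; omega : ¬ (((h' + 1 : ℕ) : ℤ) + 1 = (k : ℤ)))]
          omega

/-- Binomial coefficient on integers, `0` unless `0 ≤ b ≤ a`. -/
def binom (a b : ℤ) : ℤ :=
  if 0 ≤ b ∧ b ≤ a then (a.toNat.choose b.toNat : ℤ) else 0

/-- The total number of k-down steps over all generalized Dyck paths from (0,0) to (n,h)
equals the sum over j = 0,…,s of the number of generalized Dyck paths from (0,0) to
(n, 2k−2j+h), where s = min(k−1,h). -/
theorem stmt2 (n h k : ℕ) (hk : 1 ≤ k) (hmod : n % 2 = h % 2) :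
    (∑ p ∈ gdPaths n (h : ℤ), downSteps (k : ℤ) p) =
      ∑ j ∈ Finset.range (min (k - 1) h + 1),
        (gdPaths n (2 * (k : ℤ) - 2 * (j : ℤ) + (h : ℤ))).card := by
  exact key k hk n h
end

section
/- For all integers h ≥ 0 and n ≥ 0, the number of generalized Dyck paths from (0,0) to (n,h) equals the number of (h+1)-tuples (p₀, p₁, …, p_h) of Dyck paths whose lengths sum to n − h (both quantities being 0 when n < h or n ≢ h (mod 2)). -/
open Finset

attribute [local instance] Classical.propDecidable

-- aux
def stepVal {n : ℕ} (p : Fin n → Bool) (j : ℕ) : ℤ :=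
  if h : j < n then (if p ⟨j, h⟩ then 1 else -1) else 0

lemma stepVal_of_ge {n : ℕ} (p : Fin n → Bool) {j : ℕ} (hj : n ≤ j) : stepVal p j = 0 := by
  simp [stepVal, Nat.not_lt.mpr hj]

lemma pathHeight_eq {n : ℕ} (p : Fin n → Bool) (i : ℕ) :
    pathHeight p i = ∑ j ∈ Finset.range i, stepVal p j := by
  rw [pathHeight, Finset.sum_filter]
  have h1 : ∀ j : Fin n, (if (j : ℕ) < i then (if p j then (1:ℤ) else -1) else 0)
      = (if (j:ℕ) < i then stepVal p (j:ℕ) else 0) := by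
    intro j
    by_cases hj : (j:ℕ) < i <;> simp [hj, stepVal, j.isLt]
  rw [Finset.sum_congr rfl (fun j _ => h1 j),
    Fin.sum_univ_eq_sum_range (fun j => if j < i then stepVal p j else 0)]
  rw [← Finset.sum_filter]
  apply Finset.sum_subset_zero_on_sdiff
  · intro j hj
    simp only [Finset.mem_filter, Finset.mem_range] at hj ⊢
    exact hj.2
  · intro j hj
    simp only [Finset.mem_sdiff, Finset.mem_filter, Finset.mem_range] at hj
    exact stepVal_of_ge p (by omega)
  · intro j _; rfl

lemma pathHeight_zero {n : ℕ} (p : Fin n → Bool) : pathHeight p 0 = 0 := by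
  simp [pathHeight_eq]

lemma pathHeight_succ {n : ℕ} (p : Fin n → Bool) (i : ℕ) :
    pathHeight p (i + 1) = pathHeight p i + stepVal p i := by
  rw [pathHeight_eq, pathHeight_eq, Finset.sum_range_succ]

/-- Concatenate a path of length `m`, an up step, and a path of length `n - (m+1)`,
producing a path of length `n` (assuming `m < n`). -/
def glue (m n : ℕ) (p : Fin m → Bool) (q : Fin (n - (m+1)) → Bool) : Fin n → Bool :=
  fun i => if h1 : (i : ℕ) < m then p ⟨i, h1⟩
    else if h2 : m < (i : ℕ) ∧ (i : ℕ) - (m+1) < n - (m+1) then q ⟨(i:ℕ) - (m+1), h2.2⟩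
    else true

lemma stepVal_glue_lt {m n : ℕ} (hmn : m < n) (p : Fin m → Bool) (q : Fin (n-(m+1)) → Bool)
    {j : ℕ} (hj : j < m) : stepVal (glue m n p q) j = stepVal p j := by
  have hjn : j < n := lt_trans hj hmn
  simp [stepVal, hjn, hj, glue]

lemma stepVal_glue_eq {m n : ℕ} (hmn : m < n) (p : Fin m → Bool) (q : Fin (n-(m+1)) → Bool) :
    stepVal (glue m n p q) m = 1 := by
  simp [stepVal, hmn, glue]

lemma stepVal_glue_gt {m n : ℕ} (hmn : m < n) (p : Fin m → Bool) (q : Fin (n-(m+1)) → Bool)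
    {j : ℕ} (hj : m < j) : stepVal (glue m n p q) j = stepVal q (j - (m+1)) := by
  by_cases hjn : j < n
  · have h2 : m < j ∧ j - (m+1) < n - (m+1) := ⟨hj, by omega⟩
    have : j - (m+1) < n - (m+1) := by omega
    simp [stepVal, hjn, this, glue, Nat.not_lt.mpr (le_of_lt hj), h2]
  · rw [stepVal_of_ge _ (by omega), stepVal_of_ge _ (by omega)]

lemma pathHeight_glue_le {m n : ℕ} (hmn : m < n) (p : Fin m → Bool) (q : Fin (n-(m+1)) → Bool)
    {i : ℕ} (hi : i ≤ m) : pathHeight (glue m n p q) i = pathHeight p i := by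
  rw [pathHeight_eq, pathHeight_eq]
  exact Finset.sum_congr rfl fun j hj => stepVal_glue_lt hmn p q (by
    simp only [Finset.mem_range] at hj; omega)

lemma pathHeight_glue_ge {m n : ℕ} (hmn : m < n) (p : Fin m → Bool) (q : Fin (n-(m+1)) → Bool)
    {i : ℕ} (hi : m + 1 ≤ i) :
    pathHeight (glue m n p q) i = pathHeight p m + 1 + pathHeight q (i - (m+1)) := by
  rw [pathHeight_eq, pathHeight_eq, pathHeight_eq,
    ← Finset.sum_range_add_sum_Ico _ hi, Finset.sum_range_succ, stepVal_glue_eq hmn]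
  have e1 : ∑ j ∈ Finset.range m, stepVal (glue m n p q) j = ∑ j ∈ Finset.range m, stepVal p j :=
    Finset.sum_congr rfl fun j hj => stepVal_glue_lt hmn p q (Finset.mem_range.mp hj)
  have e2 : ∑ j ∈ Finset.Ico (m+1) i, stepVal (glue m n p q) j
      = ∑ j ∈ Finset.range (i - (m+1)), stepVal q j := by
    rw [Finset.sum_Ico_eq_sum_range]
    apply Finset.sum_congr rfl
    intro j _
    rw [stepVal_glue_gt hmn p q (by omega)]
    congr 1
    omega
  rw [e1, e2]

lemma mem_gdPaths_iff {n : ℕ} {h : ℤ} {p : Fin n → Bool} :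
    p ∈ gdPaths n h ↔ pathHeight p n = h ∧ ∀ i ≤ n, 0 ≤ pathHeight p i := by
  simp [gdPaths, IsGDPath, Finset.mem_filter]

lemma glue_mem {m n : ℕ} (hmn : m < n) {h : ℤ} {p : Fin m → Bool} {q : Fin (n-(m+1)) → Bool}
    (hp : p ∈ gdPaths m 0) (hq : q ∈ gdPaths (n-(m+1)) h) :
    glue m n p q ∈ gdPaths n (h+1) := by
  rw [mem_gdPaths_iff] at hp hq ⊢
  obtain ⟨hp1, hp2⟩ := hp
  obtain ⟨hq1, hq2⟩ := hq
  constructor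
  · rw [pathHeight_glue_ge hmn p q hmn, hp1, hq1]
    ring
  · intro i hi
    by_cases him : i ≤ m
    · rw [pathHeight_glue_le hmn p q him]
      exact hp2 i him
    · rw [pathHeight_glue_ge hmn p q (by omega), hp1]
      have := hq2 (i - (m+1)) (by omega)
      omega

lemma glue_fst {m n : ℕ} (hmn : m < n) {h : ℤ} {p : Fin m → Bool} {q : Fin (n-(m+1)) → Bool}
    (hp : p ∈ gdPaths m 0) (hq : q ∈ gdPaths (n-(m+1)) h) :
    Nat.findGreatest (fun i => pathHeight (glue m n p q) i = 0) n = m := by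
  rw [mem_gdPaths_iff] at hp hq
  have h0 : pathHeight (glue m n p q) m = 0 := by
    rw [pathHeight_glue_le hmn p q le_rfl, hp.1]
  have hle : m ≤ Nat.findGreatest (fun i => pathHeight (glue m n p q) i = 0) n :=
    Nat.le_findGreatest (le_of_lt hmn) h0
  rcases Nat.lt_or_ge m (Nat.findGreatest (fun i => pathHeight (glue m n p q) i = 0) n) with hlt | hge
  · exfalso
    have hfle := Nat.findGreatest_le (P := fun i => pathHeight (glue m n p q) i = 0) n
    have hspec : pathHeight (glue m n p q) (Nat.findGreatest
        (fun i => pathHeight (glue m n p q) i = 0) n) = 0 :=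
      Nat.findGreatest_spec (P := fun i => pathHeight (glue m n p q) i = 0)
        (Nat.zero_le n) (pathHeight_zero _)
    rw [pathHeight_glue_ge hmn p q (by omega), hp.1] at hspec
    have := hq.2 (Nat.findGreatest (fun i => pathHeight (glue m n p q) i = 0) n - (m+1)) (by omega)
    omega
  · omega

lemma glue_decomp {n h : ℕ} {r : Fin n → Bool} (hr : r ∈ gdPaths n ((h : ℤ)+1)) :
    ∃ m, m < n ∧ ∃ p ∈ gdPaths m 0, ∃ q ∈ gdPaths (n-(m+1)) (h : ℤ), r = glue m n p q := by
  rw [mem_gdPaths_iff] at hr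
  obtain ⟨hr1, hr2⟩ := hr
  set m := Nat.findGreatest (fun i => pathHeight r i = 0) n with hm
  have hm_le : m ≤ n := Nat.findGreatest_le n
  have hPm : pathHeight r m = 0 := Nat.findGreatest_spec (P := fun i => pathHeight r i = 0)
    (Nat.zero_le n) (pathHeight_zero r)
  have hgt : ∀ k, m < k → k ≤ n → 1 ≤ pathHeight r k := by
    intro k h1 h2
    have h3 := Nat.findGreatest_is_greatest (P := fun i => pathHeight r i = 0) h1 h2
    have h4 := hr2 k h2
    omega
  have hmn : m < n := by
    rcases Nat.lt_or_ge m n with h' | h'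
    · exact h'
    · exfalso
      have : m = n := le_antisymm hm_le h'
      rw [this, hr1] at hPm
      omega
  have hstep : r ⟨m, hmn⟩ = true := by
    have h1 := pathHeight_succ r m
    have h2 := hgt (m+1) (Nat.lt_succ_self m) (by omega)
    rw [hPm] at h1
    by_contra hof
    simp only [Bool.not_eq_true] at hof
    rw [h1, stepVal, dif_pos hmn, hof] at h2
    simp at h2
  have hrm1 : pathHeight r (m+1) = 1 := by
    rw [pathHeight_succ, hPm, stepVal, dif_pos hmn, hstep]
    norm_num
  set p : Fin m → Bool := fun i => r ⟨i, lt_trans i.isLt hmn⟩ with hpdef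
  set q : Fin (n-(m+1)) → Bool := fun i => r ⟨m+1+i, by have := i.isLt; omega⟩ with hqdef
  have hsp : ∀ j, j < m → stepVal p j = stepVal r j := by
    intro j hj
    simp [stepVal, hj, lt_trans hj hmn, hpdef]
  have hsq : ∀ j, stepVal q j = stepVal r (m+1+j) := by
    intro j
    by_cases hj : j < n-(m+1)
    · simp [stepVal, hj, show m+1+j < n by omega, hqdef]
    · rw [stepVal_of_ge _ (by omega), stepVal_of_ge _ (by omega)]
  have hp_h : ∀ i ≤ m, pathHeight p i = pathHeight r i := by
    intro i hi
    rw [pathHeight_eq, pathHeight_eq]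
    exact Finset.sum_congr rfl fun j hj => hsp j (by
      simp only [Finset.mem_range] at hj; omega)
  have hq_h : ∀ i, pathHeight q i = pathHeight r (m+1+i) - 1 := by
    intro i
    have h1 : pathHeight r (m+1+i) = pathHeight r (m+1) + pathHeight q i := by
      rw [pathHeight_eq r (m+1+i),
        ← Finset.sum_range_add_sum_Ico _ (show m+1 ≤ m+1+i by omega),
        Finset.sum_Ico_eq_sum_range, ← pathHeight_eq]
      congr 1
      have hii : m+1+i-(m+1) = i := by omega
      rw [hii, pathHeight_eq]
      exact Finset.sum_congr rfl fun j _ => (hsq j).symm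
    rw [h1, hrm1]
    ring
  refine ⟨m, hmn, p, ?_, q, ?_, ?_⟩
  · rw [mem_gdPaths_iff]
    refine ⟨by rw [hp_h m le_rfl]; exact hPm, fun i hi => ?_⟩
    rw [hp_h i hi]
    exact hr2 i (le_trans hi hm_le)
  · rw [mem_gdPaths_iff]
    constructor
    · rw [hq_h, show m+1+(n-(m+1)) = n by omega, hr1]
      ring
    · intro i hi
      rw [hq_h]
      have := hgt (m+1+i) (by omega) (by omega)
      omega
  · funext i
    rcases Nat.lt_trichotomy (i : ℕ) m with h1 | h1 | h1
    · simp only [glue, dif_pos h1, hpdef]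
    · have : i = ⟨m, hmn⟩ := Fin.ext h1
      rw [this, hstep]
      simp only [glue]
      rw [dif_neg (by omega), dif_neg (by simp)]
    · have hcond : m < (i:ℕ) ∧ (i:ℕ) - (m+1) < n - (m+1) := ⟨h1, by have := i.isLt; omega⟩
      simp only [glue, dif_neg (by omega : ¬ ((i:ℕ) < m)), dif_pos hcond, hqdef]
      exact congrArg r (Fin.ext (by simp; omega))

lemma glue_inj {m n : ℕ} (hmn : m < n) {p p' : Fin m → Bool} {q q' : Fin (n-(m+1)) → Bool}
    (heq : glue m n p q = glue m n p' q') : p = p' ∧ q = q' := by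
  constructor
  · funext i
    have h1 := congrFun heq ⟨i, lt_trans i.isLt hmn⟩
    simpa [glue, i.isLt] using h1
  · funext i
    have hlt : m + 1 + (i : ℕ) < n := by have := i.isLt; omega
    have h1 := congrFun heq ⟨m+1+i, hlt⟩
    have hc : m < m+1+(i:ℕ) ∧ (m+1+(i:ℕ)) - (m+1) < n - (m+1) := ⟨by omega, by
      have := i.isLt; omega⟩
    simp only [glue, dif_neg (by omega : ¬ (m+1+(i:ℕ) < m)), dif_pos hc] at h1
    have hval : (⟨(m+1+(i:ℕ)) - (m+1), hc.2⟩ : Fin (n-(m+1))) = i :=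
      Fin.ext (by simp)
    rwa [hval] at h1

lemma cardA (n h : ℕ) :
    (gdPaths n ((h:ℤ)+1)).card
      = ∑ m ∈ Finset.range n, (gdPaths m 0).card * (gdPaths (n-(m+1)) (h:ℤ)).card := by
  have hset : gdPaths n ((h:ℤ)+1) = (Finset.range n).biUnion (fun m =>
      ((gdPaths m 0) ×ˢ (gdPaths (n-(m+1)) (h:ℤ))).image (fun pq => glue m n pq.1 pq.2)) := by
    ext r
    simp only [Finset.mem_biUnion, Finset.mem_image, Finset.mem_product, Finset.mem_range,
      Prod.exists]
    constructor
    · intro hr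
      obtain ⟨m, hmn, p, hp, q, hq, hrg⟩ := glue_decomp hr
      exact ⟨m, hmn, p, q, ⟨hp, hq⟩, hrg.symm⟩
    · rintro ⟨m, hmn, p, q, ⟨hp, hq⟩, rfl⟩
      exact glue_mem hmn hp hq
  rw [hset, Finset.card_biUnion]
  · apply Finset.sum_congr rfl
    intro m hm
    rw [Finset.card_image_of_injOn, Finset.card_product]
    intro pq _ pq' _ heq
    obtain ⟨h1, h2⟩ := glue_inj (Finset.mem_range.mp hm) heq
    exact Prod.ext h1 h2
  · intro m hm m' hm' hne
    simp only [Finset.mem_coe, Finset.mem_range] at hm hm'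
    rw [Function.onFun, Finset.disjoint_left]
    intro r hr hr'
    simp only [Finset.mem_image, Finset.mem_product, Prod.exists] at hr hr'
    obtain ⟨p, q, ⟨hp, hq⟩, rfl⟩ := hr
    obtain ⟨p', q', ⟨hp', hq'⟩, heq⟩ := hr'
    apply hne
    rw [← glue_fst hm hp hq, ← heq, glue_fst hm' hp' hq']

noncomputable def tcount (h n : ℕ) : ℕ :=
  ∑ f ∈ (Fintype.piFinset fun _ : Fin (h + 1) => Finset.range (n + 1)) |>.filter
      (fun f => (∑ i, f i) + h = n),
    ∏ i, (gdPaths (f i) 0).card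

lemma tcount_zero (n : ℕ) : tcount 0 n = (gdPaths n 0).card := by
  rw [tcount]
  have hs : ((Fintype.piFinset fun _ : Fin (0 + 1) => Finset.range (n + 1)).filter
      (fun f => (∑ i, f i) + 0 = n)) = {fun _ => n} := by
    ext f
    simp only [Finset.mem_filter, Fintype.mem_piFinset, Finset.mem_range, Finset.mem_singleton,
      Nat.add_zero, Fin.sum_univ_succ, Finset.univ_eq_empty, Finset.sum_empty]
    constructor
    · rintro ⟨-, h2⟩
      funext i
      have hi0 : i = 0 := Fin.ext (by omega)
      rw [hi0]
      omega
    · rintro rfl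
      exact ⟨fun _ => Nat.lt_succ_self n, by simp⟩
  rw [hs, Finset.sum_singleton, Fin.prod_univ_succ]
  simp

lemma tcount_succ (h n : ℕ) :
    tcount (h+1) n = ∑ m ∈ Finset.range n, (gdPaths m 0).card * tcount h (n-(m+1)) := by
  have hrhs : ∑ m ∈ Finset.range n, (gdPaths m 0).card * tcount h (n-(m+1))
      = ∑ x ∈ (Finset.range n).sigma (fun m =>
          (Fintype.piFinset fun _ : Fin (h + 1) => Finset.range (n-(m+1) + 1)).filter
            (fun g => (∑ i, g i) + h = n-(m+1))),
          (gdPaths x.1 0).card * ∏ i, (gdPaths (x.2 i) 0).card := by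
    rw [Finset.sum_sigma]
    apply Finset.sum_congr rfl
    intro m _
    rw [tcount, Finset.mul_sum]
  rw [hrhs, tcount]
  clear hrhs
  refine Finset.sum_nbij' (fun f => (⟨f 0, Fin.tail f⟩ : (m : ℕ) × (Fin (h+1) → ℕ)))
    (fun x => Fin.cons x.1 x.2) ?hi ?hj ?hleft ?hright ?hval
  case hi =>
    intro f hf
    simp only [Finset.mem_filter, Fintype.mem_piFinset, Finset.mem_range] at hf
    obtain ⟨h1, h2⟩ := hf
    rw [Fin.sum_univ_succ] at h2
    have htail : ∀ i : Fin (h+1), f i.succ ≤ ∑ j : Fin (h+1), f j.succ :=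
      fun i => Finset.single_le_sum (f := fun j : Fin (h+1) => f j.succ)
        (fun j _ => Nat.zero_le _) (Finset.mem_univ i)
    have hteq : (∑ i : Fin (h+1), Fin.tail f i) = ∑ i : Fin (h+1), f i.succ := rfl
    simp only [Finset.mem_sigma, Finset.mem_range, Finset.mem_filter, Fintype.mem_piFinset]
    refine ⟨by omega, fun i => ?_, by rw [hteq]; omega⟩
    have h3 : Fin.tail f i = f i.succ := rfl
    have := htail i
    omega
  case hj =>
    intro x hx
    simp only [Finset.mem_sigma, Finset.mem_range, Finset.mem_filter,
      Fintype.mem_piFinset] at hx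
    obtain ⟨h1, h2, h3⟩ := hx
    simp only [Finset.mem_filter, Fintype.mem_piFinset, Finset.mem_range]
    constructor
    · intro i
      induction i using Fin.cases with
      | zero => simp only [Fin.cons_zero]; omega
      | succ j => simp only [Fin.cons_succ]; have := h2 j; omega
    · rw [Fin.sum_univ_succ]
      simp only [Fin.cons_zero, Fin.cons_succ]
      omega
  case hleft =>
    intro f _
    exact Fin.cons_self_tail f
  case hright =>
    intro x _
    simp only [Fin.cons_zero, Fin.tail_cons]
  case hval =>
    intro f _
    rw [Fin.prod_univ_succ]
    rfl


/-- The number of generalized Dyck paths from (0,0) to (n,h) equals the number of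
(h+1)-tuples of Dyck paths whose lengths sum to n − h. -/
theorem stmt10 (n h : ℕ) :
    (gdPaths n (h : ℤ)).card =
      ∑ f ∈ (Fintype.piFinset fun _ : Fin (h + 1) => Finset.range (n + 1)) |>.filter
          (fun f => (∑ i, f i) + h = n),
        ∏ i, (gdPaths (f i) 0).card := by
  show (gdPaths n (h : ℤ)).card = tcount h n
  induction h generalizing n with
  | zero => rw [tcount_zero]; norm_num
  | succ h IH =>
    have hc : ((h+1 : ℕ) : ℤ) = (h : ℤ) + 1 := by push_cast; ring
    rw [hc, cardA, tcount_succ]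
    exact Finset.sum_congr rfl fun m _ => by rw [IH]
end
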